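/- (Smoothness perturbation lower bound.) Let S⁽ⁱ⁾, S⁽ⁿ⁾ ∈ ℝ^N be such that the noise vector n = S⁽ⁿ⁾ − S⁽ⁱ⁾ has exactly n_f nonzero entries, each equal to 2A or −2A, where A > 0. Then SM(S⁽ⁿ⁾) ≥ SM(S⁽ⁱ⁾) − 2·n_f·A·D^{3/2}·√Δ − 2·n_f·A·√(Δ·D). -/

import Mathlib

open scoped Classical

lemma sqrt_sum_le' (s : Finset ℕ) (f : ℕ → ℝ) (hf : ∀ j ∈ s, 0 ≤ f j) :
    Real.sqrt (∑ j ∈ s, f j) ≤ ∑ j ∈ s, Real.sqrt (f j) := by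
  have h1 : ∑ j ∈ s, f j ≤ (∑ j ∈ s, Real.sqrt (f j)) ^ 2 := by
    calc ∑ j ∈ s, f j = ∑ j ∈ s, Real.sqrt (f j) ^ 2 :=
          Finset.sum_congr rfl fun j hj => (Real.sq_sqrt (hf j hj)).symm
      _ ≤ _ := Finset.sum_sq_le_sq_sum_of_nonneg fun j _ => Real.sqrt_nonneg _
  exact (Real.sqrt_le_sqrt h1).trans_eq
    (Real.sqrt_sq (Finset.sum_nonneg fun j _ => Real.sqrt_nonneg _))

lemma minkowski' (s : Finset ℕ) (w x y : ℕ → ℝ) (hw : ∀ j ∈ s, 0 ≤ w j) :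
    Real.sqrt (∑ j ∈ s, w j * (x j + y j) ^ 2) ≤
      Real.sqrt (∑ j ∈ s, w j * x j ^ 2) + Real.sqrt (∑ j ∈ s, w j * y j ^ 2) := by
  set A := ∑ j ∈ s, w j * x j ^ 2 with hAdef
  set B := ∑ j ∈ s, w j * y j ^ 2 with hBdef
  have hA : 0 ≤ A := Finset.sum_nonneg fun j hj => mul_nonneg (hw j hj) (sq_nonneg _)
  have hB : 0 ≤ B := Finset.sum_nonneg fun j hj => mul_nonneg (hw j hj) (sq_nonneg _)
  have hCS : ∑ j ∈ s, w j * (x j * y j) ≤ Real.sqrt A * Real.sqrt B := by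
    have h := Real.sum_mul_le_sqrt_mul_sqrt s (fun j => Real.sqrt (w j) * x j)
      (fun j => Real.sqrt (w j) * y j)
    have e1 : ∑ j ∈ s, (Real.sqrt (w j) * x j) * (Real.sqrt (w j) * y j)
        = ∑ j ∈ s, w j * (x j * y j) := Finset.sum_congr rfl fun j hj => by
      rw [show (Real.sqrt (w j) * x j) * (Real.sqrt (w j) * y j)
          = (Real.sqrt (w j) * Real.sqrt (w j)) * (x j * y j) by ring,
        Real.mul_self_sqrt (hw j hj)]
    have e2 : ∑ j ∈ s, (Real.sqrt (w j) * x j) ^ 2 = A := Finset.sum_congr rfl fun j hj => by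
      rw [mul_pow, Real.sq_sqrt (hw j hj)]
    have e3 : ∑ j ∈ s, (Real.sqrt (w j) * y j) ^ 2 = B := Finset.sum_congr rfl fun j hj => by
      rw [mul_pow, Real.sq_sqrt (hw j hj)]
    rwa [e1, e2, e3] at h
  have key : ∑ j ∈ s, w j * (x j + y j) ^ 2 ≤ (Real.sqrt A + Real.sqrt B) ^ 2 := by
    have expand : ∑ j ∈ s, w j * (x j + y j) ^ 2
        = A + B + 2 * ∑ j ∈ s, w j * (x j * y j) := by
      rw [hAdef, hBdef, Finset.mul_sum, ← Finset.sum_add_distrib, ← Finset.sum_add_distrib]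
      exact Finset.sum_congr rfl fun j _ => by ring
    rw [expand]
    have h2 : (Real.sqrt A + Real.sqrt B) ^ 2
        = A + B + 2 * (Real.sqrt A * Real.sqrt B) := by
      rw [add_sq, Real.sq_sqrt hA, Real.sq_sqrt hB]; ring
    rw [h2]; linarith
  exact (Real.sqrt_le_sqrt key).trans_eq (Real.sqrt_sq (by positivity))


/-- The smoothness of a graph signal `S ∈ ℝ^N` with respect to the weighted adjacency
matrix `a`: `SM(S) = ∑_{i} (∑_{j} a(i,j)·(S(j) − S(i))²)^{1/2}`. -/
noncomputable def smoothness (N : ℕ) (a : ℕ → ℕ → ℝ) (S : ℕ → ℝ) : ℝ :=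
  ∑ i ∈ Finset.range N, Real.sqrt (∑ j ∈ Finset.range N, a i j * (S j - S i) ^ 2)

/-- **Smoothness perturbation lower bound.**
If the noise vector `n = Sⁿ − Sⁱ` has exactly `n_f` nonzero entries, each equal to
`2A` or `−2A` with `A > 0`, then
`SM(Sⁿ) ≥ SM(Sⁱ) − 2·n_f·A·D^{3/2}·√Δ − 2·n_f·A·√(Δ·D)`, where `Δ` bounds the edge
weights and `D ≥ 1` bounds the node degrees. -/
theorem smoothness_perturb_lower (N : ℕ) (hN : 1 ≤ N) (a : ℕ → ℕ → ℝ)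
    (hsymm : ∀ i j, a i j = a j i) (hnn : ∀ i j, 0 ≤ a i j)
    (hdiag : ∀ i, a i i = 0)
    (Δ : ℝ) (hΔ : 0 < Δ) (haΔ : ∀ i j, a i j ≤ Δ)
    (D : ℝ) (hD : 1 ≤ D)
    (hdeg : ∀ i ∈ Finset.range N,
      ((((Finset.range N).filter (fun j => a i j ≠ 0)).card : ℝ)) ≤ D)
    (A : ℝ) (hA : 0 < A) (nf : ℕ)
    (Si Sn : ℕ → ℝ)
    (F : Finset ℕ) (hFsub : F ⊆ Finset.range N) (hFcard : F.card = nf)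
    (hFval : ∀ k ∈ F, Sn k - Si k = 2 * A ∨ Sn k - Si k = -(2 * A))
    (hF0 : ∀ k ∈ Finset.range N, k ∉ F → Sn k = Si k) :
    smoothness N a Sn ≥ smoothness N a Si -
      2 * (nf : ℝ) * A * D ^ ((3 : ℝ) / 2) * Real.sqrt Δ -
      2 * (nf : ℝ) * A * Real.sqrt (Δ * D) := by
  classical
  set d : ℕ → ℝ := fun k => Sn k - Si k with hd
  have hdabs : ∀ k ∈ F, |d k| = 2 * A := by
    intro k hk
    rcases hFval k hk with h | h
    · rw [show d k = 2 * A from h, abs_of_nonneg (by positivity)]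
    · rw [show d k = -(2 * A) from h, abs_neg, abs_of_nonneg (by positivity)]
  have hd0 : ∀ k ∈ Finset.range N, k ∉ F → d k = 0 := by
    intro k hk hkF; simp [hd, hF0 k hk hkF]
  set Qd : ℕ → ℝ := fun i => ∑ j ∈ Finset.range N, a i j * (d j - d i) ^ 2 with hQd
  -- Step 1: reverse triangle inequality
  have key1 : ∀ i ∈ Finset.range N,
      Real.sqrt (∑ j ∈ Finset.range N, a i j * (Si j - Si i) ^ 2) - Real.sqrt (Qd i)
        ≤ Real.sqrt (∑ j ∈ Finset.range N, a i j * (Sn j - Sn i) ^ 2) := by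
    intro i _
    have m := minkowski' (Finset.range N) (a i) (fun j => Sn j - Sn i)
      (fun j => -(d j - d i)) (fun j _ => hnn i j)
    have e1 : ∑ j ∈ Finset.range N, a i j * ((fun j => Sn j - Sn i) j + (fun j => -(d j - d i)) j) ^ 2
        = ∑ j ∈ Finset.range N, a i j * (Si j - Si i) ^ 2 :=
      Finset.sum_congr rfl fun j _ => by simp only [hd]; ring_nf
    have e2 : ∑ j ∈ Finset.range N, a i j * ((fun j => -(d j - d i)) j) ^ 2 = Qd i :=
      Finset.sum_congr rfl fun j _ => by ring
    rw [e1, e2] at m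
    linarith
  -- Step 2: per-node bound on sqrt (Qd i)
  have key2 : ∀ i ∈ Finset.range N,
      Real.sqrt (Qd i) ≤
        (∑ j ∈ F, if a i j ≠ 0 then 2 * A * Real.sqrt Δ else 0)
          + |d i| * Real.sqrt (Δ * D) := by
    intro i hi
    have m := minkowski' (Finset.range N) (a i) d (fun _ => -(d i)) (fun j _ => hnn i j)
    have e1 : ∑ j ∈ Finset.range N, a i j * (d j + (fun _ => -(d i)) j) ^ 2 = Qd i :=
      Finset.sum_congr rfl fun j _ => by ring
    rw [e1] at m
    have hT1 : Real.sqrt (∑ j ∈ Finset.range N, a i j * d j ^ 2)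
        ≤ ∑ j ∈ F, if a i j ≠ 0 then 2 * A * Real.sqrt Δ else 0 := by
      have eF : ∑ j ∈ Finset.range N, a i j * d j ^ 2 = ∑ j ∈ F, a i j * d j ^ 2 :=
        (Finset.sum_subset hFsub fun j hj hjF => by rw [hd0 j hj hjF]; ring).symm
      rw [eF]
      refine (sqrt_sum_le' F _ fun j _ => mul_nonneg (hnn i j) (sq_nonneg _)).trans ?_
      refine Finset.sum_le_sum fun j hj => ?_
      rw [Real.sqrt_mul (hnn i j), Real.sqrt_sq_eq_abs, hdabs j hj]
      by_cases h : a i j = 0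
      · simp [h]
      · simp only [h, if_neg, ne_eq, not_false_eq_true, if_true]
        have : Real.sqrt (a i j) ≤ Real.sqrt Δ := Real.sqrt_le_sqrt (haΔ i j)
        nlinarith [Real.sqrt_nonneg (a i j), hA.le]
    have hT2 : Real.sqrt (∑ j ∈ Finset.range N, a i j * ((fun _ => -(d i)) j) ^ 2)
        ≤ |d i| * Real.sqrt (Δ * D) := by
      have e2 : ∑ j ∈ Finset.range N, a i j * ((fun _ => -(d i)) j) ^ 2
          = (∑ j ∈ Finset.range N, a i j) * d i ^ 2 := by
        rw [Finset.sum_mul]; exact Finset.sum_congr rfl fun j _ => by ring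
      have hsum : ∑ j ∈ Finset.range N, a i j ≤ Δ * D := by
        have efil : ∑ j ∈ (Finset.range N).filter (fun j => a i j ≠ 0), a i j
            = ∑ j ∈ Finset.range N, a i j := by
          refine Finset.sum_subset (Finset.filter_subset _ _) fun j hj hjf => ?_
          by_contra h
          exact hjf (Finset.mem_filter.mpr ⟨hj, h⟩)
        have hle : ∑ j ∈ (Finset.range N).filter (fun j => a i j ≠ 0), a i j
            ≤ (((Finset.range N).filter (fun j => a i j ≠ 0)).card : ℝ) * Δ := by
          calc _ ≤ ∑ _j ∈ (Finset.range N).filter (fun j => a i j ≠ 0), Δ :=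
                Finset.sum_le_sum fun j _ => haΔ i j
            _ = _ := by rw [Finset.sum_const, nsmul_eq_mul]
        rw [← efil]
        calc _ ≤ _ := hle
          _ ≤ D * Δ := mul_le_mul_of_nonneg_right (hdeg i hi) hΔ.le
          _ = Δ * D := mul_comm _ _
      rw [e2, Real.sqrt_mul (Finset.sum_nonneg fun j _ => hnn i j), Real.sqrt_sq_eq_abs,
        mul_comm]
      exact mul_le_mul_of_nonneg_left (Real.sqrt_le_sqrt hsum) (abs_nonneg _)
    exact m.trans (add_le_add hT1 hT2)
  -- Step 3: sum the bounds
  have hsumd : ∑ i ∈ Finset.range N, |d i| = 2 * (nf : ℝ) * A := by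
    have : ∑ i ∈ Finset.range N, |d i| = ∑ i ∈ F, |d i| :=
      (Finset.sum_subset hFsub fun i hi hiF => by rw [hd0 i hi hiF, abs_zero]).symm
    rw [this, Finset.sum_congr rfl hdabs, Finset.sum_const, hFcard, nsmul_eq_mul]
    ring
  have hS1 : ∑ i ∈ Finset.range N, ∑ j ∈ F, (if a i j ≠ 0 then 2 * A * Real.sqrt Δ else 0)
      ≤ (nf : ℝ) * (2 * A * Real.sqrt Δ * D) := by
    rw [Finset.sum_comm]
    have hin : ∀ j ∈ F, ∑ i ∈ Finset.range N, (if a i j ≠ 0 then 2 * A * Real.sqrt Δ else 0)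
        ≤ 2 * A * Real.sqrt Δ * D := by
      intro j hj
      have ecard : ∑ i ∈ Finset.range N, (if a i j ≠ 0 then 2 * A * Real.sqrt Δ else 0)
          = (((Finset.range N).filter (fun i => a i j ≠ 0)).card : ℝ) * (2 * A * Real.sqrt Δ) := by
        rw [← Finset.sum_filter, Finset.sum_const, nsmul_eq_mul]
      rw [ecard]
      have efil : (Finset.range N).filter (fun i => a i j ≠ 0)
          = (Finset.range N).filter (fun i => a j i ≠ 0) := by
        apply Finset.filter_congr; intro i _; simp [hsymm i j]
      have hcard : (((Finset.range N).filter (fun i => a i j ≠ 0)).card : ℝ) ≤ D := by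
        rw [efil]; exact hdeg j (hFsub hj)
      have hc : (0:ℝ) ≤ 2 * A * Real.sqrt Δ := by positivity
      calc _ ≤ D * (2 * A * Real.sqrt Δ) := mul_le_mul_of_nonneg_right hcard hc
        _ = 2 * A * Real.sqrt Δ * D := by ring
    calc _ ≤ ∑ _j ∈ F, 2 * A * Real.sqrt Δ * D := Finset.sum_le_sum hin
      _ = (nf : ℝ) * (2 * A * Real.sqrt Δ * D) := by
          rw [Finset.sum_const, hFcard, nsmul_eq_mul]
  have hQdsum : ∑ i ∈ Finset.range N, Real.sqrt (Qd i)
      ≤ (nf : ℝ) * (2 * A * Real.sqrt Δ * D) + 2 * (nf : ℝ) * A * Real.sqrt (Δ * D) := by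
    calc ∑ i ∈ Finset.range N, Real.sqrt (Qd i)
        ≤ ∑ i ∈ Finset.range N,
            ((∑ j ∈ F, if a i j ≠ 0 then 2 * A * Real.sqrt Δ else 0)
              + |d i| * Real.sqrt (Δ * D)) := Finset.sum_le_sum key2
      _ = (∑ i ∈ Finset.range N, ∑ j ∈ F, (if a i j ≠ 0 then 2 * A * Real.sqrt Δ else 0))
            + (∑ i ∈ Finset.range N, |d i|) * Real.sqrt (Δ * D) := by
          rw [Finset.sum_add_distrib, Finset.sum_mul]
      _ ≤ _ := by rw [hsumd]; exact add_le_add hS1 le_rfl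
  have hmain : smoothness N a Si - ∑ i ∈ Finset.range N, Real.sqrt (Qd i)
      ≤ smoothness N a Sn := by
    have := Finset.sum_le_sum key1
    rwa [Finset.sum_sub_distrib] at this
  -- Final arithmetic
  have hDpow : D ≤ D ^ ((3 : ℝ) / 2) := by
    calc D = D ^ (1 : ℝ) := (Real.rpow_one D).symm
      _ ≤ _ := Real.rpow_le_rpow_of_exponent_le hD (by norm_num)
  have hfin : (nf : ℝ) * (2 * A * Real.sqrt Δ * D)
      ≤ 2 * (nf : ℝ) * A * D ^ ((3 : ℝ) / 2) * Real.sqrt Δ := by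
    have h1 : (0:ℝ) ≤ 2 * (nf : ℝ) * A * Real.sqrt Δ := by positivity
    nlinarith [Real.sqrt_nonneg Δ, hA.le, (Nat.cast_nonneg nf : (0:ℝ) ≤ (nf:ℝ))]
  unfold smoothness at *
  linarith [hQdsum, hmain, hfin]
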